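/- Let X ∈ ℝ^{n×n} be a rank-r matrix that is {μ₁,μ₂}-incoherent. Suppose I is a multiset of |I| ≥ 10 μ₁ r log(n) row indices and J is a multiset of |J| ≥ 10 μ₂ r log(n) column indices, each drawn i.i.d. uniformly from {1,…,n} (sampling with replacement). Then with probability at least 1 − 4r/n², X = [X]_{:,J} ([X]_{I,J})† [X]_{I,:}, i.e., X is exactly reconstructed by the CUR decomposition formed from its sampled columns and rows. -/

import Mathlib

open Matrix
open scoped Classical

/-- `B` is the Moore–Penrose pseudoinverse of `A`, characterized by the four
Penrose conditions (over `ℝ`, where conjugate transpose is transpose). -/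
def IsMPInv {m n : Type*} [Fintype m] [Fintype n] (A : Matrix m n ℝ)
    (B : Matrix n m ℝ) : Prop :=
  A * B * A = A ∧ B * A * B = B ∧ (A * B)ᵀ = A * B ∧ (B * A)ᵀ = B * A

/-- Probability of the event `P` under the uniform distribution on the finite
type `α` (counting measure normalized). -/
noncomputable def unifProb {α : Type*} [Fintype α] (P : α → Prop) : ℝ :=
  ((Finset.univ.filter P).card : ℝ) / (Fintype.card α : ℝ)

open Module


lemma submul {l m o p q : Type*} [Fintype m] [Fintype l][Fintype o]
    (A : Matrix l m ℝ) (B : Matrix m o ℝ) (f : p → l) (g : q → o) :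
    (A * B).submatrix f g = A.submatrix f id * B.submatrix id g := by
  ext i j; simp [Matrix.mul_apply, Matrix.submatrix_apply]

lemma cur_exact {n r kI kJ : ℕ} (X : Matrix (Fin n) (Fin n) ℝ)
    (W V : Matrix (Fin n) (Fin r) ℝ) (σ : Fin r → ℝ)
    (hX : X = W * Matrix.diagonal σ * Vᵀ)
    (f : Fin kI → Fin n) (g : Fin kJ → Fin n)
    (L : Matrix (Fin r) (Fin kI) ℝ) (hL : L * W.submatrix f id = 1)
    (N : Matrix (Fin kJ) (Fin r) ℝ) (hN : (V.submatrix g id)ᵀ * N = 1)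
    (Udag : Matrix (Fin kJ) (Fin kI) ℝ)
    (hU : X.submatrix f g * Udag * X.submatrix f g = X.submatrix f g) :
    X = X.submatrix id g * Udag * X.submatrix f id := by
  set D := Matrix.diagonal σ
  set Wf := W.submatrix f id
  set Vg := V.submatrix g id
  have hVgT : Vᵀ.submatrix id g = Vgᵀ := by ext i j; simp [Vg, Matrix.submatrix_apply]
  have hXfg : X.submatrix f g = Wf * D * Vgᵀ := by
    rw [hX, submul (W * D) Vᵀ f g, submul W D f id, hVgT]
    simp [Matrix.submatrix_id_id]; rfl
  have hXg : X.submatrix id g = W * D * Vgᵀ := by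
    rw [hX, submul (W * D) Vᵀ id g, hVgT, Matrix.submatrix_id_id]
  have hXf : X.submatrix f id = Wf * D * Vᵀ := by
    rw [hX, submul (W * D) Vᵀ f id, submul W D f id, Matrix.submatrix_id_id, Matrix.submatrix_id_id]
  have cancel : ∀ (M : Matrix (Fin r) (Fin r) ℝ), L * (Wf * M) = M := fun M => by
    rw [← Matrix.mul_assoc, hL, Matrix.one_mul]
  have key : D * (Vgᵀ * (Udag * (Wf * D))) = D := by
    have h1 : L * (X.submatrix f g * Udag * X.submatrix f g) * N = L * X.submatrix f g * N := by
      rw [hU]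
    rw [hXfg] at h1
    simp only [Matrix.mul_assoc] at h1
    rw [hN, Matrix.mul_one, cancel, cancel] at h1
    exact h1
  rw [hXg, hXf, hX]
  simp only [Matrix.mul_assoc]
  rw [show Wf * (D * Vᵀ) = Wf * D * Vᵀ from (Matrix.mul_assoc _ _ _).symm]
  calc W * (D * Vᵀ) = W * (D * (Vgᵀ * (Udag * (Wf * D))) * Vᵀ) := by rw [key]
    _ = W * (D * (Vgᵀ * (Udag * (Wf * D * Vᵀ)))) := by simp only [Matrix.mul_assoc]

variable {n r : ℕ}

noncomputable def wv (W : Matrix (Fin n) (Fin r) ℝ) (x : Fin n) : EuclideanSpace ℝ (Fin r) :=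
  (WithLp.equiv 2 (Fin r → ℝ)).symm (W x)

lemma inner_wv (W : Matrix (Fin n) (Fin r) ℝ) (x : Fin n) (u : EuclideanSpace ℝ (Fin r)) :
    (inner ℝ (wv W x) u : ℝ) = ∑ j, W x j * u j := by
  simp [wv, PiLp.inner_apply, RCLike.inner_apply, WithLp.equiv]
  exact Finset.sum_congr rfl (fun _ _ => mul_comm _ _)

lemma sum_inner_sq (W : Matrix (Fin n) (Fin r) ℝ) (hWortho : Wᵀ * W = 1)
    (u : EuclideanSpace ℝ (Fin r)) :
    ∑ x : Fin n, (inner ℝ (wv W x) u : ℝ) ^ 2 = ‖u‖ ^ 2 := by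
  have horth : ∀ j j', ∑ x, W x j * W x j' = if j = j' then (1:ℝ) else 0 := by
    intro j j'
    have := congrFun (congrFun hWortho j) j'
    simpa [Matrix.mul_apply, Matrix.one_apply, Matrix.transpose_apply] using this
  have : ∑ x : Fin n, (inner ℝ (wv W x) u : ℝ) ^ 2
      = ∑ x : Fin n, ∑ j, ∑ j', (W x j * u j) * (W x j' * u j') := by
    simp only [inner_wv, sq, Finset.sum_mul_sum]
  rw [this]
  rw [Finset.sum_comm]
  have : ∀ j, ∑ x : Fin n, ∑ j', (W x j * u j) * (W x j' * u j')
      = ∑ j', (u j * u j') * ∑ x, W x j * W x j' := by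
    intro j
    rw [Finset.sum_comm]
    congr 1; ext j'
    rw [Finset.mul_sum]
    congr 1; ext x; ring
  simp only [this, horth, mul_ite, mul_one, mul_zero, Finset.sum_ite_eq', Finset.mem_univ, if_true]
  rw [EuclideanSpace.norm_eq]
  rw [Real.sq_sqrt (by positivity)]
  congr 1; ext j; simp [sq]

lemma step_count (W : Matrix (Fin n) (Fin r) ℝ) (hWortho : Wᵀ * W = 1) (c : ℝ)
    (hWinc : ∀ x, ∑ j, (W x j) ^ 2 ≤ c) (U : Submodule ℝ (EuclideanSpace ℝ (Fin r))) :
    (r : ℝ) - finrank ℝ U ≤ ((Finset.univ.filter (fun x : Fin n => wv W x ∉ U)).card : ℝ) * c := by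
  classical
  set m := finrank ℝ ↥Uᗮ with hmdef
  have hm : finrank ℝ U + m = r := by
    rw [hmdef, Submodule.finrank_add_finrank_orthogonal, finrank_euclideanSpace_fin]
  set b := stdOrthonormalBasis ℝ ↥Uᗮ
  have hON : Orthonormal ℝ (fun j : Fin m => ((b j : ↥Uᗮ) : EuclideanSpace ℝ (Fin r))) := by
    have := (Uᗮ.subtypeₗᵢ.orthonormal_comp_iff (v := fun j : Fin m => b j)).mpr b.orthonormal
    exact this
  have hnorm1 : ∀ j : Fin m, ‖((b j : ↥Uᗮ) : EuclideanSpace ℝ (Fin r))‖ = 1 := fun j => hON.1 j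
  have key : (m : ℝ) = ∑ x : Fin n, ∑ j : Fin m,
      (inner ℝ (wv W x) ((b j : ↥Uᗮ) : EuclideanSpace ℝ (Fin r)) : ℝ) ^ 2 := by
    rw [Finset.sum_comm]
    have h3 : ∀ j : Fin m, ∑ x : Fin n,
        (inner ℝ (wv W x) ((b j : ↥Uᗮ) : EuclideanSpace ℝ (Fin r)) : ℝ) ^ 2 = 1 := by
      intro j
      rw [sum_inner_sq W hWortho, hnorm1, one_pow]
    rw [Finset.sum_congr rfl (fun j _ => h3 j), Finset.sum_const]
    simp
  have hzero : ∀ x : Fin n, wv W x ∈ U → ∀ j : Fin m,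
      (inner ℝ (wv W x) ((b j : ↥Uᗮ) : EuclideanSpace ℝ (Fin r)) : ℝ) = 0 := by
    intro x hx j
    exact (Submodule.mem_orthogonal U _).mp (b j).2 _ hx
  have key2 : (m : ℝ) = ∑ x ∈ Finset.univ.filter (fun x : Fin n => wv W x ∉ U), ∑ j : Fin m,
      (inner ℝ (wv W x) ((b j : ↥Uᗮ) : EuclideanSpace ℝ (Fin r)) : ℝ) ^ 2 := by
    rw [key]
    symm
    apply Finset.sum_subset (Finset.filter_subset _ _)
    intro x _ hx
    simp only [Finset.mem_filter, Finset.mem_univ, true_and, not_not] at hx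
    exact Finset.sum_eq_zero (fun j _ => by rw [hzero x hx j]; ring)
  have hbessel : ∀ x : Fin n, ∑ j : Fin m,
      (inner ℝ (wv W x) ((b j : ↥Uᗮ) : EuclideanSpace ℝ (Fin r)) : ℝ) ^ 2 ≤ c := by
    intro x
    have h1 := hON.sum_inner_products_le (wv W x) (s := Finset.univ)
    have h2 : ∑ j : Fin m, (inner ℝ (wv W x) ((b j : ↥Uᗮ) : EuclideanSpace ℝ (Fin r)) : ℝ) ^ 2
        ≤ ‖wv W x‖ ^ 2 := by
      refine le_trans (le_of_eq ?_) h1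
      congr 1; ext j
      rw [real_inner_comm]
      simp [Real.norm_eq_abs, sq_abs]
    refine h2.trans ?_
    have : ‖wv W x‖ ^ 2 = ∑ j, (W x j) ^ 2 := by
      rw [EuclideanSpace.norm_eq, Real.sq_sqrt (by positivity)]
      congr 1; ext j
      have : wv W x j = W x j := rfl
      rw [this, Real.norm_eq_abs, sq_abs]
    rw [this]; exact hWinc x
  have : (m : ℝ) ≤ ((Finset.univ.filter (fun x : Fin n => wv W x ∉ U)).card : ℝ) * c := by
    rw [key2]
    calc _ ≤ ∑ _x ∈ Finset.univ.filter (fun x : Fin n => wv W x ∉ U), c :=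
          Finset.sum_le_sum (fun x _ => hbessel x)
      _ = _ := by rw [Finset.sum_const, nsmul_eq_mul]
  have hc : (finrank ℝ ↥U : ℝ) + (m : ℝ) = r := by exact_mod_cast hm
  linarith


noncomputable def spanF (W : Matrix (Fin n) (Fin r) ℝ) {t : ℕ} (f : Fin t → Fin n) :
    Submodule ℝ (EuclideanSpace ℝ (Fin r)) :=
  Submodule.span ℝ (Set.range (fun i => wv W (f i)))

noncomputable def dF (W : Matrix (Fin n) (Fin r) ℝ) {t : ℕ} (f : Fin t → Fin n) : ℕ :=
  finrank ℝ (spanF W f)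

lemma dF_le (W : Matrix (Fin n) (Fin r) ℝ) {t : ℕ} (f : Fin t → Fin n) : dF W f ≤ r := by
  have := Submodule.finrank_le (spanF W f)
  rwa [finrank_euclideanSpace_fin] at this

lemma spanF_zero (W : Matrix (Fin n) (Fin r) ℝ) (f : Fin 0 → Fin n) : spanF W f = ⊥ := by
  have : Set.range (fun i : Fin 0 => wv W (f i)) = ∅ := Set.range_eq_empty _
  rw [spanF, this, Submodule.span_empty]

lemma spanF_cons (W : Matrix (Fin n) (Fin r) ℝ) {t : ℕ} (f : Fin t → Fin n) (x : Fin n) :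
    spanF W (Fin.cons x f) = Submodule.span ℝ {wv W x} ⊔ spanF W f := by
  have hrange : (Set.range fun i => wv W ((Fin.cons x f : Fin (t+1) → Fin n) i))
      = insert (wv W x) (Set.range fun i => wv W (f i)) := by
    ext v
    simp only [Set.mem_range, Set.mem_insert_iff]
    constructor
    · rintro ⟨i, rfl⟩
      induction i using Fin.cases with
      | zero => left; rw [Fin.cons_zero]
      | succ j => right; exact ⟨j, by rw [Fin.cons_succ]⟩
    · rintro (rfl | ⟨i, rfl⟩)
      · exact ⟨0, by rw [Fin.cons_zero]⟩
      · exact ⟨i.succ, by rw [Fin.cons_succ]⟩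
  rw [spanF, hrange, Submodule.span_insert]
  rfl

lemma dF_cons_mem (W : Matrix (Fin n) (Fin r) ℝ) {t : ℕ} (f : Fin t → Fin n) (x : Fin n)
    (hx : wv W x ∈ spanF W f) : dF W (Fin.cons x f) = dF W f := by
  rw [dF, spanF_cons, sup_eq_right.mpr ((Submodule.span_singleton_le_iff_mem _ _).mpr hx)]
  rfl

lemma dF_cons_not_mem (W : Matrix (Fin n) (Fin r) ℝ) {t : ℕ} (f : Fin t → Fin n) (x : Fin n)
    (hx : wv W x ∉ spanF W f) : dF W (Fin.cons x f) = dF W f + 1 := by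
  rw [dF, spanF_cons]
  set U := spanF W f
  set U' := Submodule.span ℝ {wv W x} ⊔ U
  have hvne : wv W x ≠ 0 := fun h => hx (h ▸ Submodule.zero_mem U)
  have h1 := Submodule.finrank_sup_add_finrank_inf_eq (Submodule.span ℝ {wv W x}) U
  rw [finrank_span_singleton hvne] at h1
  have hlt : finrank ℝ ↥U < finrank ℝ ↥U' := by
    apply Submodule.finrank_lt_finrank_of_lt
    refine lt_of_le_of_ne le_sup_right (fun h => hx ?_)
    have : wv W x ∈ U' := Submodule.mem_sup_left (Submodule.mem_span_singleton_self _)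
    rwa [← h] at this
  have hdf : dF W f = finrank ℝ ↥U := rfl
  have h1' : finrank ℝ ↥U' + finrank ℝ ↥(Submodule.span ℝ {wv W x} ⊓ U) = 1 + finrank ℝ ↥U := h1
  show finrank ℝ ↥U' = dF W f + 1
  omega

lemma sum_cons_le (W : Matrix (Fin n) (Fin r) ℝ) (hWortho : Wᵀ * W = 1)
    (c : ℝ) (hc : 1 ≤ c) (hn : 0 < n)
    (hrow : ∀ x, ∑ j, (W x j) ^ 2 ≤ c / n)
    (a : ℝ) (ha0 : 0 ≤ a) (ha1 : a ≤ 1) {t : ℕ} (f : Fin t → Fin n) :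
    ∑ x : Fin n, (a ^ dF W (Fin.cons x f) - a ^ r)
      ≤ (n : ℝ) * (1 - 1/c) * (a ^ dF W f - a ^ r) := by
  have hc0 : (0:ℝ) < c := lt_of_lt_of_le one_pos hc
  have hn0 : (0:ℝ) < n := by exact_mod_cast hn
  have hk := dF_le W f
  by_cases hkr : dF W f = r
  · have htop : spanF W f = ⊤ :=
      Submodule.eq_top_of_finrank_eq (by rw [finrank_euclideanSpace_fin]; exact hkr)
    have hall : ∀ x : Fin n, dF W (Fin.cons x f) = r := by
      intro x
      rw [dF_cons_mem W f x (htop ▸ Submodule.mem_top), hkr]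
    simp [hall, hkr, sub_self]
  · have hklt : dF W f < r := lt_of_le_of_ne hk hkr
    set k := dF W f with hkdef
    set G := Finset.univ.filter (fun x : Fin n => wv W x ∉ spanF W f) with hGdef
    have hsplit : ∑ x : Fin n, (a ^ dF W (Fin.cons x f) - a ^ r)
        = (G.card : ℝ) * (a ^ (k+1) - a ^ r) + ((n : ℝ) - G.card) * (a ^ k - a ^ r) := by
      rw [← Finset.sum_filter_add_sum_filter_not Finset.univ
        (fun x : Fin n => wv W x ∉ spanF W f)]
      have e1 : ∀ x ∈ G, a ^ dF W (Fin.cons x f) - a ^ r = a ^ (k+1) - a ^ r := by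
        intro x hx
        simp only [hGdef, Finset.mem_filter] at hx
        rw [dF_cons_not_mem W f x hx.2]
      have e2 : ∀ x ∈ Finset.univ.filter (fun x : Fin n => ¬ wv W x ∉ spanF W f),
          a ^ dF W (Fin.cons x f) - a ^ r = a ^ k - a ^ r := by
        intro x hx
        simp only [Finset.mem_filter, not_not] at hx
        rw [dF_cons_mem W f x hx.2]
      rw [Finset.sum_congr rfl e1, Finset.sum_congr rfl e2, Finset.sum_const, Finset.sum_const,
        nsmul_eq_mul, nsmul_eq_mul]
      have hcards : ((Finset.univ.filter (fun x : Fin n => ¬ wv W x ∉ spanF W f)).card : ℝ)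
          = (n : ℝ) - G.card := by
        have h := Finset.card_filter_add_card_filter_not
          (s := (Finset.univ : Finset (Fin n))) (p := fun x : Fin n => wv W x ∉ spanF W f)
        have h2 : (G.card : ℝ) + ((Finset.univ.filter
            (fun x : Fin n => ¬ wv W x ∉ spanF W f)).card : ℝ) = n := by
          rw [hGdef]
          exact_mod_cast congrArg (Nat.cast (R := ℝ)) (by simpa using h)
        linarith
      rw [hcards]
    rw [hsplit]
    -- real arithmetic
    have hg : (r : ℝ) - k ≤ (G.card : ℝ) * (c / n) := by
      have := step_count W hWortho (c / n) hrow (spanF W f)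
      exact this
    set g := (G.card : ℝ) with hgdef
    set m := r - k with hmdef
    have hm1 : 1 ≤ m := by omega
    have hrm : (r : ℝ) - k = (m : ℝ) := by push_cast [hmdef, Nat.cast_sub hk]; ring
    have hq : a ^ r = a ^ k * a ^ m := by rw [← pow_add]; congr 1; omega
    have key : 1 - a ^ m ≤ (m : ℝ) * (1 - a) := by
      have := one_add_mul_le_pow (a := a - 1) (by linarith) m
      have h' : 1 + (m : ℝ) * (a - 1) ≤ a ^ m := by
        rw [add_sub_cancel] at this; exact this
      linarith
    have h2 : a ^ k - a ^ r ≤ (m : ℝ) * (1 - a) * a ^ k := by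
      have hak : (0:ℝ) ≤ a ^ k := pow_nonneg ha0 k
      have := mul_le_mul_of_nonneg_left key hak
      rw [hq]; nlinarith
    have h3 : (n : ℝ) * m / c ≤ g := by
      rw [hrm] at hg
      have he : g * (c / n) = g * c / n := by ring
      rw [he, le_div_iff₀ hn0] at hg
      rw [div_le_iff₀ hc0]
      linarith
    have hx0 : (0:ℝ) ≤ (1 - a) * a ^ k := mul_nonneg (by linarith) (pow_nonneg ha0 k)
    have main : ((n:ℝ)/c) * (a ^ k - a ^ r) ≤ g * ((1 - a) * a ^ k) := by
      calc ((n:ℝ)/c) * (a ^ k - a ^ r) ≤ ((n:ℝ)/c) * ((m : ℝ) * (1 - a) * a ^ k) :=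
            mul_le_mul_of_nonneg_left h2 (by positivity)
        _ = ((n:ℝ) * m / c) * ((1 - a) * a ^ k) := by ring
        _ ≤ g * ((1 - a) * a ^ k) := mul_le_mul_of_nonneg_right h3 hx0
    have hA : a ^ (k + 1) = a ^ k * a := pow_succ a k
    rw [hA]
    have hexp : (n:ℝ) * (1 - 1/c) * (a ^ k - a ^ r)
        = (n:ℝ) * (a ^ k - a ^ r) - ((n:ℝ)/c) * (a ^ k - a ^ r) := by ring
    nlinarith [main]

lemma sum_pot_le (W : Matrix (Fin n) (Fin r) ℝ) (hWortho : Wᵀ * W = 1)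
    (c : ℝ) (hc : 1 ≤ c) (hn : 0 < n)
    (hrow : ∀ x, ∑ j, (W x j) ^ 2 ≤ c / n)
    (a : ℝ) (ha0 : 0 ≤ a) (ha1 : a ≤ 1) :
    ∀ t : ℕ, ∑ f : Fin t → Fin n, (a ^ dF W f - a ^ r) ≤ ((n : ℝ) * (1 - 1/c)) ^ t := by
  intro t
  induction t with
  | zero =>
    rw [pow_zero]
    have hone : ∀ f : Fin 0 → Fin n, a ^ dF W f - a ^ r = 1 - a ^ r := by
      intro f
      rw [dF, spanF_zero, finrank_bot, pow_zero]
    rw [Finset.sum_congr rfl (fun f _ => hone f), Finset.sum_const, nsmul_eq_mul]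
    have hcard : (Fintype.card (Fin 0 → Fin n) : ℝ) = 1 := by
      simp [Fintype.card_fun]
    rw [Finset.card_univ, hcard, one_mul]
    have : 0 ≤ a ^ r := pow_nonneg ha0 r
    linarith
  | succ t ih =>
    have hnc0 : (0:ℝ) ≤ (n : ℝ) * (1 - 1/c) := by
      have hc0 : (0:ℝ) < c := lt_of_lt_of_le one_pos hc
      have : (0:ℝ) ≤ 1 - 1/c := by
        rw [sub_nonneg, div_le_one hc0]; exact hc
      positivity
    have hequiv : ∑ h : Fin (t+1) → Fin n, (a ^ dF W h - a ^ r)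
        = ∑ p : Fin n × (Fin t → Fin n), (a ^ dF W (Fin.cons p.1 p.2) - a ^ r) := by
      rw [← Fintype.sum_equiv (Fin.consEquiv (fun _ : Fin (t+1) => Fin n))
        (fun p => a ^ dF W (Fin.cons p.1 p.2) - a ^ r) (fun h => a ^ dF W h - a ^ r)]
      intro p
      rfl
    rw [hequiv, Fintype.sum_prod_type, Finset.sum_comm]
    calc ∑ f : Fin t → Fin n, ∑ x : Fin n, (a ^ dF W (Fin.cons x f) - a ^ r)
        ≤ ∑ f : Fin t → Fin n, (n : ℝ) * (1 - 1/c) * (a ^ dF W f - a ^ r) :=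
          Finset.sum_le_sum (fun f _ => sum_cons_le W hWortho c hc hn hrow a ha0 ha1 f)
      _ = (n : ℝ) * (1 - 1/c) * ∑ f : Fin t → Fin n, (a ^ dF W f - a ^ r) := by
          rw [Finset.mul_sum]
      _ ≤ (n : ℝ) * (1 - 1/c) * ((n : ℝ) * (1 - 1/c)) ^ t :=
          mul_le_mul_of_nonneg_left ih hnc0
      _ = ((n : ℝ) * (1 - 1/c)) ^ (t+1) := by rw [pow_succ]; ring

lemma bad_card_le (W : Matrix (Fin n) (Fin r) ℝ) (hWortho : Wᵀ * W = 1)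
    (c : ℝ) (hc : 1 ≤ c) (hn : 0 < n) (hr : 1 ≤ r)
    (hrow : ∀ x, ∑ j, (W x j) ^ 2 ≤ c / n)
    (a : ℝ) (ha0 : 0 ≤ a) (ha1 : a ≤ 1) (t : ℕ) :
    ((Finset.univ.filter (fun f : Fin t → Fin n => spanF W f ≠ ⊤)).card : ℝ)
      * (a ^ (r-1) * (1-a)) ≤ ((n : ℝ) * (1 - 1/c)) ^ t := by
  have hY0 : ∀ f : Fin t → Fin n, 0 ≤ a ^ dF W f - a ^ r := by
    intro f
    have := pow_le_pow_of_le_one ha0 ha1 (dF_le W f)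
    linarith
  have hbadY : ∀ f : Fin t → Fin n, spanF W f ≠ ⊤ → a ^ (r-1) * (1-a) ≤ a ^ dF W f - a ^ r := by
    intro f hbad
    have hdlt : dF W f < r := by
      rcases lt_or_eq_of_le (dF_le W f) with h | h
      · exact h
      · exact absurd (Submodule.eq_top_of_finrank_eq
          (by rw [finrank_euclideanSpace_fin]; exact h)) hbad
    have h1 : a ^ (r-1) ≤ a ^ dF W f := pow_le_pow_of_le_one ha0 ha1 (by omega)
    have h2 : a ^ r = a ^ (r-1) * a := by
      rw [← pow_succ]; congr 1; omega
    nlinarith [pow_nonneg ha0 (r-1)]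
  calc ((Finset.univ.filter (fun f : Fin t → Fin n => spanF W f ≠ ⊤)).card : ℝ)
        * (a ^ (r-1) * (1-a))
      = ∑ _f ∈ Finset.univ.filter (fun f : Fin t → Fin n => spanF W f ≠ ⊤),
          (a ^ (r-1) * (1-a)) := by rw [Finset.sum_const, nsmul_eq_mul]
    _ ≤ ∑ f ∈ Finset.univ.filter (fun f : Fin t → Fin n => spanF W f ≠ ⊤),
          (a ^ dF W f - a ^ r) := by
        apply Finset.sum_le_sum
        intro f hf
        simp only [Finset.mem_filter] at hf
        exact hbadY f hf.2
    _ ≤ ∑ f : Fin t → Fin n, (a ^ dF W f - a ^ r) := by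
        apply Finset.sum_le_sum_of_subset_of_nonneg (Finset.filter_subset _ _)
        intro f _ _
        exact hY0 f
    _ ≤ ((n : ℝ) * (1 - 1/c)) ^ t := sum_pot_le W hWortho c hc hn hrow a ha0 ha1 t

lemma exp_neg_one_le_pow (r : ℕ) (hr : 1 ≤ r) :
    Real.exp (-1) ≤ (1 - 1/(r:ℝ)) ^ (r - 1) := by
  rcases Nat.eq_or_lt_of_le hr with h | h
  · rw [← h]; norm_num
  · set s := r - 1 with hsdef
    have hs1 : 1 ≤ s := by omega
    have hs0 : (0:ℝ) < s := by exact_mod_cast hs1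
    have hrs : (r : ℝ) = (s : ℝ) + 1 := by
      rw [hsdef]; push_cast [Nat.cast_sub hr]; ring
    have he : Real.exp (-(1/(s:ℝ))) ≤ 1 - 1/(r:ℝ) := by
      have h1 : 1 + 1/(s:ℝ) ≤ Real.exp (1/(s:ℝ)) := by
        have := Real.add_one_le_exp (1/(s:ℝ))
        linarith
      have h2 : (0:ℝ) < 1 + 1/(s:ℝ) := by positivity
      have h3 : Real.exp (-(1/(s:ℝ))) = (Real.exp (1/(s:ℝ)))⁻¹ := Real.exp_neg _
      rw [h3]
      have h4 : (Real.exp (1/(s:ℝ)))⁻¹ ≤ (1 + 1/(s:ℝ))⁻¹ :=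
        inv_anti₀ h2 h1
      refine h4.trans (le_of_eq ?_)
      rw [hrs]
      field_simp
      ring
    calc Real.exp (-1) = Real.exp (-(1/(s:ℝ))) ^ s := by
          rw [← Real.exp_nat_mul]
          congr 1
          field_simp
      _ ≤ (1 - 1/(r:ℝ)) ^ s := pow_le_pow_left₀ (Real.exp_nonneg _) he s

lemma bad_frac (W : Matrix (Fin n) (Fin r) ℝ) (hWortho : Wᵀ * W = 1)
    (c : ℝ) (hc : 1 ≤ c) (hn : 0 < n) (hr : 1 ≤ r)
    (hrow : ∀ x, ∑ j, (W x j) ^ 2 ≤ c / n) (t : ℕ)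
    (ht : 10 * c * Real.log n ≤ t) :
    ((Finset.univ.filter (fun f : Fin t → Fin n => spanF W f ≠ ⊤)).card : ℝ)
      ≤ (n:ℝ)^t * (Real.exp 1 * r / (n:ℝ)^10) := by
  have hr0 : (0:ℝ) < r := by exact_mod_cast hr
  have hn0 : (0:ℝ) < n := by exact_mod_cast hn
  have hc0 : (0:ℝ) < c := lt_of_lt_of_le one_pos hc
  set a := 1 - 1/(r:ℝ) with hadef
  have ha0 : 0 ≤ a := by
    rw [hadef, sub_nonneg]
    rw [div_le_one hr0]
    exact_mod_cast hr
  have ha1 : a ≤ 1 := by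
    rw [hadef]
    have : (0:ℝ) ≤ 1/(r:ℝ) := by positivity
    linarith
  have h1a : 1 - a = 1/(r:ℝ) := by rw [hadef]; ring
  have hlb : Real.exp (-1) / r ≤ a ^ (r-1) * (1-a) := by
    rw [h1a, hadef]
    have := exp_neg_one_le_pow r hr
    rw [div_le_iff₀ hr0]
    calc Real.exp (-1) ≤ (1 - 1/(r:ℝ)) ^ (r-1) := this
      _ = (1 - 1/(r:ℝ)) ^ (r-1) * (1/(r:ℝ)) * r := by field_simp
  have hmain := bad_card_le W hWortho c hc hn hr hrow a ha0 ha1 t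
  set B := ((Finset.univ.filter (fun f : Fin t → Fin n => spanF W f ≠ ⊤)).card : ℝ) with hBdef
  have hB0 : 0 ≤ B := by positivity
  have h5 : B * (Real.exp (-1) / r) ≤ ((n:ℝ) * (1 - 1/c)) ^ t :=
    le_trans (mul_le_mul_of_nonneg_left hlb hB0) hmain
  -- bound the RHS
  have hpow : ((n:ℝ) * (1 - 1/c)) ^ t ≤ (n:ℝ)^t * ((n:ℝ)^10)⁻¹ := by
    have e1 : ((n:ℝ) * (1 - 1/c)) ^ t = (n:ℝ)^t * (1 - 1/c)^t := mul_pow _ _ _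
    have h1c0 : (0:ℝ) ≤ 1 - 1/c := by
      rw [sub_nonneg, div_le_one hc0]; exact hc
    have e2 : (1 - 1/c)^t ≤ Real.exp (-(1/c))^t := by
      apply pow_le_pow_left₀ h1c0
      have := Real.add_one_le_exp (-(1/c))
      linarith
    have e3 : Real.exp (-(1/c))^t = Real.exp (-(t/c)) := by
      rw [← Real.exp_nat_mul]
      congr 1
      field_simp
    have e4 : Real.exp (-((t:ℝ)/c)) ≤ Real.exp (-(10 * Real.log n)) := by
      apply Real.exp_le_exp.mpr
      rw [neg_le_neg_iff, le_div_iff₀ hc0]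
      linarith
    have e5 : Real.exp (-(10 * Real.log n)) = ((n:ℝ)^10)⁻¹ := by
      rw [Real.exp_neg]
      congr 1
      rw [show (10:ℝ) * Real.log n = Real.log ((n:ℝ)^(10:ℕ)) by rw [Real.log_pow]; norm_num,
        Real.exp_log (by positivity)]
    rw [e1]
    have : (1 - 1/c)^t ≤ ((n:ℝ)^10)⁻¹ := by
      rw [← e5]
      exact e2.trans (le_of_eq e3 |>.trans e4)
    exact mul_le_mul_of_nonneg_left this (by positivity)
  have h6 : B * (Real.exp (-1) / r) ≤ (n:ℝ)^t * ((n:ℝ)^10)⁻¹ := h5.trans hpow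
  have hexp1 : Real.exp (-1) = (Real.exp 1)⁻¹ := Real.exp_neg 1
  have hep : (0:ℝ) < Real.exp 1 := Real.exp_pos 1
  have hone : (Real.exp (-1) / r) * (r * Real.exp 1) = 1 := by
    rw [hexp1]; field_simp
  calc B = B * (Real.exp (-1) / r) * (r * Real.exp 1) := by
        rw [mul_assoc, hone, mul_one]
    _ ≤ (n:ℝ)^t * ((n:ℝ)^10)⁻¹ * (r * Real.exp 1) := by
        apply mul_le_mul_of_nonneg_right h6 (by positivity)
    _ = (n:ℝ)^t * (Real.exp 1 * r / (n:ℝ)^10) := by ring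


lemma exists_left_inv {k r : ℕ} (M : Matrix (Fin k) (Fin r) ℝ)
    (h : ∀ u : Fin r → ℝ, M.mulVec u = 0 → u = 0) :
    ∃ L : Matrix (Fin r) (Fin k) ℝ, L * M = 1 := by
  set G := Mᵀ * M with hG
  have hGinj : ∀ u, G.mulVec u = 0 → u = 0 := by
    intro u hu
    apply h
    have h2 : M.mulVec u ⬝ᵥ M.mulVec u = 0 := by
      rw [Matrix.dotProduct_mulVec, ← Matrix.mulVec_transpose, Matrix.mulVec_mulVec, ← hG, hu,
        zero_dotProduct]
    exact dotProduct_self_eq_zero.mp h2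
  have hdet : G.det ≠ 0 := by
    intro hd
    obtain ⟨v, hv, hv0⟩ := (Matrix.exists_mulVec_eq_zero_iff).mpr hd
    exact hv (hGinj v hv0)
  exact ⟨G⁻¹ * Mᵀ, by rw [Matrix.mul_assoc, ← hG, Matrix.nonsing_inv_mul G (Ne.isUnit hdet)]⟩

lemma left_inv_of_spanF_top {k : ℕ} (W : Matrix (Fin n) (Fin r) ℝ) (f : Fin k → Fin n)
    (hspan : spanF W f = ⊤) :
    ∃ L : Matrix (Fin r) (Fin k) ℝ, L * W.submatrix f id = 1 := by
  apply exists_left_inv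
  intro u hu
  set u' : EuclideanSpace ℝ (Fin r) := (WithLp.equiv 2 (Fin r → ℝ)).symm u with hu'def
  have hinner : ∀ i, (inner ℝ (wv W (f i)) u' : ℝ) = 0 := by
    intro i
    rw [inner_wv]
    have h := congrFun hu i
    have h' : ∑ x, W (f i) x * u x = 0 := by
      simpa [Matrix.mulVec, dotProduct, Matrix.submatrix_apply] using h
    exact h'
  have horth : u' ∈ (spanF W f)ᗮ := by
    rw [Submodule.mem_orthogonal]
    intro v hv
    induction hv using Submodule.span_induction with
    | mem x hx => obtain ⟨i, rfl⟩ := hx; exact hinner i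
    | zero => simp
    | add x y _ _ hx hy => rw [inner_add_left, hx, hy, add_zero]
    | smul c x _ hx => rw [real_inner_smul_left, hx, mul_zero]
  rw [hspan, Submodule.top_orthogonal_eq_bot] at horth
  have h0 : u' = 0 := horth
  have := congrArg (WithLp.equiv 2 (Fin r → ℝ)) h0
  simpa [hu'def] using this

lemma trace_sum (W : Matrix (Fin n) (Fin r) ℝ) (hWortho : Wᵀ * W = 1) :
    ∑ x, ∑ j, (W x j) ^ 2 = (r : ℝ) := by
  rw [Finset.sum_comm]
  have h : ∀ j : Fin r, ∑ x, (W x j) ^ 2 = 1 := by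
    intro j
    have := congrFun (congrFun hWortho j) j
    simp only [Matrix.mul_apply, Matrix.transpose_apply, Matrix.one_apply_eq] at this
    rw [← this]
    congr 1; ext x; ring
  rw [Finset.sum_congr rfl (fun j _ => h j), Finset.sum_const, nsmul_eq_mul]
  simp

lemma row_bound (W : Matrix (Fin n) (Fin r) ℝ) (hWortho : Wᵀ * W = 1) (μ : ℝ)
    (hr : 1 ≤ r) (hn : 0 < n)
    (hWinc : ∀ i, Real.sqrt (∑ j, (W i j) ^ 2) ≤ Real.sqrt (μ * r / n)) :
    1 ≤ μ * r ∧ ∀ i, ∑ j, (W i j) ^ 2 ≤ (μ * r) / n := by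
  have hn0 : (0:ℝ) < n := by exact_mod_cast hn
  have hr0 : (0:ℝ) < r := by exact_mod_cast hr
  have hsq : ∀ i, ∑ j, (W i j) ^ 2 ≤ max (μ * r / n) 0 := by
    intro i
    have h0 : (0:ℝ) ≤ ∑ j, (W i j) ^ 2 := by positivity
    have h2 : Real.sqrt (∑ j, (W i j) ^ 2) ^ 2 ≤ Real.sqrt (μ * r / n) ^ 2 :=
      pow_le_pow_left₀ (Real.sqrt_nonneg _) (hWinc i) 2
    rw [Real.sq_sqrt h0] at h2
    rcases le_or_gt 0 (μ * r / n) with hp | hp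
    · rw [Real.sq_sqrt hp] at h2
      exact h2.trans (le_max_left _ _)
    · rw [Real.sqrt_eq_zero_of_nonpos hp.le] at h2
      simpa using h2.trans (by norm_num : (0:ℝ)^2 ≤ max (μ * r / n) 0)
  have hsum : (r : ℝ) ≤ n * max (μ * r / n) 0 := by
    calc (r : ℝ) = ∑ x, ∑ j, (W x j) ^ 2 := (trace_sum W hWortho).symm
      _ ≤ ∑ _x : Fin n, max (μ * r / n) 0 :=
          Finset.sum_le_sum (fun x _ => hsq x)
      _ = n * max (μ * r / n) 0 := by rw [Finset.sum_const, nsmul_eq_mul]; simp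
  have hmax : max (μ * r / n) 0 = μ * r / n := by
    rcases max_choice (μ * r / n) 0 with h | h
    · exact h
    · rw [h] at hsum; linarith
  rw [hmax] at hsum hsq
  constructor
  · have hr1 : (1:ℝ) ≤ r := by exact_mod_cast hr
    have he : (n:ℝ) * (μ * r / n) = μ * r := by field_simp
    linarith
  · exact hsq

set_option maxHeartbeats 1000000 in
theorem uniform_sampling_cur_reconstruction (n r kI kJ : ℕ) (hn : 0 < n)
    (X : Matrix (Fin n) (Fin n) ℝ) (hrank : X.rank = r) (μ₁ μ₂ : ℝ)
    (W V : Matrix (Fin n) (Fin r) ℝ) (σ : Fin r → ℝ) (hσ : ∀ i, 0 < σ i)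
    (hX : X = W * Matrix.diagonal σ * Vᵀ)
    (hWortho : Wᵀ * W = 1) (hVortho : Vᵀ * V = 1)
    (hWinc : ∀ i, Real.sqrt (∑ j, (W i j) ^ 2) ≤ Real.sqrt (μ₁ * r / n))
    (hVinc : ∀ i, Real.sqrt (∑ j, (V i j) ^ 2) ≤ Real.sqrt (μ₂ * r / n))
    (hkI : (kI : ℝ) ≥ 10 * μ₁ * r * Real.log n)
    (hkJ : (kJ : ℝ) ≥ 10 * μ₂ * r * Real.log n) :
    1 - 4 * r / (n : ℝ) ^ 2 ≤
      unifProb (fun fg : (Fin kI → Fin n) × (Fin kJ → Fin n) =>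
        ∀ Udag : Matrix (Fin kJ) (Fin kI) ℝ,
          IsMPInv (X.submatrix fg.1 fg.2) Udag →
            X = X.submatrix id fg.2 * Udag * X.submatrix fg.1 id) := by
  classical
  have hn0 : (0:ℝ) < n := by exact_mod_cast hn
  set P : (Fin kI → Fin n) × (Fin kJ → Fin n) → Prop := fun fg =>
    ∀ Udag : Matrix (Fin kJ) (Fin kI) ℝ,
      IsMPInv (X.submatrix fg.1 fg.2) Udag →
        X = X.submatrix id fg.2 * Udag * X.submatrix fg.1 id with hPdef
  have hNcard : (Fintype.card ((Fin kI → Fin n) × (Fin kJ → Fin n)) : ℝ)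
      = (n:ℝ)^kI * (n:ℝ)^kJ := by
    rw [Fintype.card_prod, Fintype.card_fun, Fintype.card_fun]
    push_cast
    simp
  have hprob0 : 0 ≤ unifProb P := by
    rw [unifProb]
    positivity
  by_cases htriv : 1 - 4 * (r:ℝ) / (n : ℝ) ^ 2 ≤ 0
  · exact htriv.trans hprob0
  push_neg at htriv
  by_cases hr0 : r = 0
  · subst hr0
    have hX0 : X = 0 := by
      rw [hX]; ext i j; simp [Matrix.mul_apply]
    have hall : ∀ fg, P fg := by
      intro fg Udag _
      rw [hX0]
      ext i j
      simp [Matrix.mul_apply]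
    have : unifProb P = 1 := by
      rw [unifProb, Finset.filter_true_of_mem (fun x _ => hall x), Finset.card_univ, div_self]
      rw [hNcard]
      positivity
    rw [this]
    norm_num
  have hr : 1 ≤ r := Nat.one_le_iff_ne_zero.mpr hr0
  have hr1 : (1:ℝ) ≤ r := by exact_mod_cast hr
  -- n ≥ 3
  have hn4 : 4 * (r:ℝ) < (n:ℝ)^2 := by
    have := htriv
    rw [sub_pos, div_lt_one (by positivity)] at this
    exact this
  have hn2 : (2:ℝ) ≤ n := by
    nlinarith
  -- incoherence consequences
  obtain ⟨hc1, hrowW⟩ := row_bound W hWortho μ₁ hr hn hWinc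
  obtain ⟨hc2, hrowV⟩ := row_bound V hVortho μ₂ hr hn hVinc
  -- bad counts
  have hbadW := bad_frac W hWortho (μ₁ * r) hc1 hn hr hrowW kI
    (by rw [show 10 * (μ₁ * (r:ℝ)) * Real.log n = 10 * μ₁ * r * Real.log n by ring]; exact hkI)
  have hbadV := bad_frac V hVortho (μ₂ * r) hc2 hn hr hrowV kJ
    (by rw [show 10 * (μ₂ * (r:ℝ)) * Real.log n = 10 * μ₂ * r * Real.log n by ring]; exact hkJ)
  -- exp 1 * r / n^10 ≤ 2 r / n^2
  have hfrac : Real.exp 1 * r / (n:ℝ)^10 ≤ 2 * r / (n:ℝ)^2 := by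
    rw [div_le_div_iff₀ (by positivity) (by positivity)]
    have he3 : Real.exp 1 ≤ 3 := by
      have := Real.exp_one_lt_d9
      linarith
    have h8 : (2:ℝ)^8 ≤ (n:ℝ)^8 := pow_le_pow_left₀ (by norm_num) hn2 8
    have hn10 : (n:ℝ)^10 = (n:ℝ)^8 * (n:ℝ)^2 := by ring
    have hA : Real.exp 1 ≤ 2 * (n:ℝ)^8 := by norm_num at h8 ⊢; linarith
    have hB := mul_le_mul_of_nonneg_right hA (show (0:ℝ) ≤ (r:ℝ) * (n:ℝ)^2 by positivity)
    nlinarith [hB]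
  set q : ℝ := 2 * r / (n:ℝ)^2 with hqdef
  have hq0 : 0 ≤ q := by positivity
  -- good sets
  set BadW := Finset.univ.filter (fun f : Fin kI → Fin n => spanF W f ≠ ⊤) with hBW
  set BadV := Finset.univ.filter (fun g : Fin kJ → Fin n => spanF V g ≠ ⊤) with hBV
  set GoodW := Finset.univ.filter (fun f : Fin kI → Fin n => spanF W f = ⊤) with hGW
  set GoodV := Finset.univ.filter (fun g : Fin kJ → Fin n => spanF V g = ⊤) with hGV
  have hsplitW : (GoodW.card : ℝ) + BadW.card = (n:ℝ)^kI := by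
    have h := Finset.card_filter_add_card_filter_not
      (s := (Finset.univ : Finset (Fin kI → Fin n)))
      (p := fun f : Fin kI → Fin n => spanF W f = ⊤)
    rw [Finset.card_univ, Fintype.card_fun] at h
    have : GoodW.card + BadW.card = n ^ kI := by
      rw [hGW, hBW]
      simpa [Fintype.card_fin] using h
    exact_mod_cast congrArg (Nat.cast (R := ℝ)) this
  have hsplitV : (GoodV.card : ℝ) + BadV.card = (n:ℝ)^kJ := by
    have h := Finset.card_filter_add_card_filter_not
      (s := (Finset.univ : Finset (Fin kJ → Fin n)))
      (p := fun g : Fin kJ → Fin n => spanF V g = ⊤)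
    rw [Finset.card_univ, Fintype.card_fun] at h
    have : GoodV.card + BadV.card = n ^ kJ := by
      rw [hGV, hBV]
      simpa [Fintype.card_fin] using h
    exact_mod_cast congrArg (Nat.cast (R := ℝ)) this
  -- event inclusion
  have hsub : GoodW ×ˢ GoodV ⊆ Finset.univ.filter P := by
    rintro ⟨f, g⟩ hfg
    rw [Finset.mem_product] at hfg
    obtain ⟨hf, hg⟩ := hfg
    rw [hGW, Finset.mem_filter] at hf
    rw [hGV, Finset.mem_filter] at hg
    rw [Finset.mem_filter]
    refine ⟨Finset.mem_univ _, ?_⟩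
    intro Udag hMP
    obtain ⟨L, hL⟩ := left_inv_of_spanF_top W f hf.2
    obtain ⟨L', hL'⟩ := left_inv_of_spanF_top V g hg.2
    have hN : (V.submatrix g id)ᵀ * L'ᵀ = 1 := by
      rw [← Matrix.transpose_mul, hL', Matrix.transpose_one]
    exact cur_exact X W V σ hX f g L hL L'ᵀ hN Udag hMP.1
  -- probability computation
  have hcard : ((GoodW ×ˢ GoodV).card : ℝ) ≤ ((Finset.univ.filter P).card : ℝ) := by
    exact_mod_cast Finset.card_le_card hsub
  rw [Finset.card_product] at hcard
  push_cast at hcard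
  rw [unifProb, hNcard, le_div_iff₀ (by positivity)]
  have hbW : (BadW.card : ℝ) ≤ (n:ℝ)^kI * q := by
    refine hbadW.trans ?_
    exact mul_le_mul_of_nonneg_left hfrac (by positivity)
  have hbV : (BadV.card : ℝ) ≤ (n:ℝ)^kJ * q := by
    refine hbadV.trans ?_
    exact mul_le_mul_of_nonneg_left hfrac (by positivity)
  have hbW0 : (0:ℝ) ≤ BadW.card := Nat.cast_nonneg _
  have hbV0 : (0:ℝ) ≤ BadV.card := Nat.cast_nonneg _
  have hgw : (GoodW.card : ℝ) = (n:ℝ)^kI - BadW.card := by linarith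
  have hgv : (GoodV.card : ℝ) = (n:ℝ)^kJ - BadV.card := by linarith
  have h4q : 4 * (r:ℝ) / (n:ℝ)^2 = 2 * q := by rw [hqdef]; ring
  calc (1 - 4 * (r:ℝ) / (n : ℝ) ^ 2) * ((n:ℝ)^kI * (n:ℝ)^kJ)
      ≤ (GoodW.card : ℝ) * (GoodV.card : ℝ) := by
        rw [h4q, hgw, hgv]
        nlinarith [mul_le_mul_of_nonneg_right hbW (pow_nonneg hn0.le kJ),
          mul_le_mul_of_nonneg_right hbV (pow_nonneg hn0.le kI),
          mul_nonneg hbW0 hbV0]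
    _ ≤ ((Finset.univ.filter P).card : ℝ) := hcard
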